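/- Let i < j, let (Λ, k) ∈ N_i and (Θ, u) ∈ N_j with u < k and λ_u ≥ 1, and set Γ = Λ − e_u + Θ (the exponent partition of the nonzero Lie bracket [x^Λ∂_k, x^Θ∂_u]). Then (Γ, k) ∈ N_{j−1}. -/
import Mathlib


/-- Weight of a partition (finitely supported sequence of multiplicities). -/
def wt (Λ : ℕ →₀ ℕ) : ℕ := Λ.sum fun m c => m * c

/-- Degree (number of parts, with multiplicity) of a partition. -/
def deg (Λ : ℕ →₀ ℕ) : ℕ := Λ.sum fun _ c => c

/-- Basis element of the integral Lie ring of partitions: a pair (Λ, k) with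
1 ≤ k ≤ n and all parts of Λ in {1,…,k-1}. -/
def IsBasisElt (n : ℕ) (Λ : ℕ →₀ ℕ) (k : ℕ) : Prop :=
  1 ≤ k ∧ k ≤ n ∧ Λ 0 = 0 ∧ ∀ m, k ≤ m → Λ m = 0

/-- The weight-degree function. -/
def WD (n : ℕ) (Λ : ℕ →₀ ℕ) (k : ℕ) : ℤ :=
  (wt Λ : ℤ) - (deg Λ : ℤ) + (n : ℤ) - (k : ℤ)

/-- h_i = ⌊(i-1)/(n-1)⌋ + 1. -/
def hh (n : ℕ) (i : ℤ) : ℤ := (i - 1).fdiv ((n : ℤ) - 1) + 1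

/-- r_i = i - (h_i - 1)(n-1). -/
def rr (n : ℕ) (i : ℤ) : ℤ := i - (hh n i - 1) * ((n : ℤ) - 1)

/-- The i-th level function lev_i(Λ,k) = h_i·WD(Λ,k) + deg(Λ) - 1. -/
def lev (n : ℕ) (i : ℤ) (Λ : ℕ →₀ ℕ) (k : ℕ) : ℤ :=
  hh n i * WD n Λ k + (deg Λ : ℤ) - 1

/-- N_i = set of basis elements with lev_j ≤ j for some -1 ≤ j ≤ i. -/
def Nset (n : ℕ) (i : ℤ) : Set ((ℕ →₀ ℕ) × ℕ) :=
  {p | IsBasisElt n p.1 p.2 ∧ ∃ j : ℤ, -1 ≤ j ∧ j ≤ i ∧ lev n j p.1 p.2 ≤ j}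

/-- L_i = set of basis elements for which i is the least index j ≥ -1 with lev_j = j. -/
def Lset (n : ℕ) (i : ℤ) : Set ((ℕ →₀ ℕ) × ℕ) :=
  {p | IsBasisElt n p.1 p.2 ∧ lev n i p.1 p.2 = i ∧
    ∀ j : ℤ, -1 ≤ j → lev n j p.1 p.2 = j → i ≤ j}

/-- The partition function p(s). -/
def pfun (s : ℕ) : ℕ := Fintype.card (Nat.Partition s)

/-- b_m = Σ_{s=0}^m p(s). -/
def bnat (m : ℕ) : ℕ := ∑ s ∈ Finset.range (m + 1), pfun s

/-- c_m = Σ_{s=0}^m b_s. -/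
def cnat (m : ℕ) : ℕ := ∑ s ∈ Finset.range (m + 1), bnat s

/-- b extended to ℤ, with b_m = 0 for m < 0. -/
def bint (m : ℤ) : ℕ := if m < 0 then 0 else bnat m.toNat

/-- The period map per(Λ,k) = (Λ + (n-1-WD(Λ,k))·e₁, k). -/
noncomputable def per (n : ℕ) (p : (ℕ →₀ ℕ) × ℕ) : (ℕ →₀ ℕ) × ℕ :=
  (p.1 + Finsupp.single 1 (((n : ℤ) - 1 - WD n p.1 p.2).toNat), p.2)


lemma wt_add (f g : ℕ →₀ ℕ) : wt (f + g) = wt f + wt g :=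
  Finsupp.sum_add_index' (fun a => by simp) (fun a b c => by ring)

lemma deg_add (f g : ℕ →₀ ℕ) : deg (f + g) = deg f + deg g :=
  Finsupp.sum_add_index' (fun a => rfl) (fun a b c => rfl)

lemma wt_single (u c : ℕ) : wt (Finsupp.single u c) = u * c :=
  Finsupp.sum_single_index (by simp)

lemma deg_single (u c : ℕ) : deg (Finsupp.single u c) = c :=
  Finsupp.sum_single_index rfl

lemma le_deg (f : ℕ →₀ ℕ) (u : ℕ) : f u ≤ deg f := by
  by_cases h : f u = 0
  · simp [h]
  · exact Finset.single_le_sum (f := fun m => f m) (fun m _ => Nat.zero_le _)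
      (Finsupp.mem_support_iff.mpr h)

lemma deg_le_wt (f : ℕ →₀ ℕ) (h0 : f 0 = 0) : deg f ≤ wt f := by
  refine Finset.sum_le_sum fun m hm => ?_
  have hm' : m ≠ 0 := by
    intro h; rw [h] at hm; exact (Finsupp.mem_support_iff.mp hm) h0
  exact Nat.le_mul_of_pos_left (f m) (Nat.pos_of_ne_zero hm')

lemma wt_le (f : ℕ →₀ ℕ) (k : ℕ) (hk : 1 ≤ k) (h : ∀ m, k ≤ m → f m = 0) :
    wt f ≤ (k - 1) * deg f := by
  unfold wt deg
  rw [Finsupp.sum, Finsupp.sum, Finset.mul_sum]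
  refine Finset.sum_le_sum fun m hm => ?_
  have : m < k := by
    by_contra hc
    exact (Finsupp.mem_support_iff.mp hm) (h m (le_of_not_gt hc))
  exact Nat.mul_le_mul_right _ (by omega)

lemma castN {n : ℕ} (hn : 3 ≤ n) : (2:ℤ) ≤ (n:ℤ) - 1 := by
  have : (3:ℤ) ≤ (n:ℤ) := by exact_mod_cast hn
  omega

lemma hh_eq {n : ℕ} (hn : 3 ≤ n) (w : ℤ) : hh n w = (w - 1) / ((n:ℤ) - 1) + 1 := by
  unfold hh
  rw [Int.fdiv_eq_ediv_of_nonneg _ (by linarith [castN hn] : (0:ℤ) ≤ (n:ℤ) - 1)]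

lemma le_hh_mul {n : ℕ} (hn : 3 ≤ n) (w : ℤ) : w ≤ hh n w * ((n:ℤ) - 1) := by
  have hN : (0:ℤ) < (n:ℤ) - 1 := by linarith [castN hn]
  have := Int.lt_ediv_add_one_mul_self (w - 1) hN
  rw [hh_eq hn]; linarith

lemma hh_mul_le {n : ℕ} (hn : 3 ≤ n) (w : ℤ) : (hh n w - 1) * ((n:ℤ) - 1) ≤ w - 1 := by
  have hN : ((n:ℤ) - 1) ≠ 0 := by
    linarith [castN hn]
  have := Int.ediv_mul_le (w - 1) hN
  rw [hh_eq hn]; linarith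

lemma hh_mono {n : ℕ} (hn : 3 ≤ n) {a b : ℤ} (h : a ≤ b) : hh n a ≤ hh n b := by
  have hN : (0:ℤ) < (n:ℤ) - 1 := by linarith [castN hn]
  rw [hh_eq hn, hh_eq hn]
  have := Int.ediv_le_ediv hN (by linarith : a - 1 ≤ b - 1)
  linarith

lemma hh_nonneg {n : ℕ} (hn : 3 ≤ n) {w : ℤ} (hw : -1 ≤ w) : 0 ≤ hh n w := by
  have h1 : hh n (-1) ≤ hh n w := hh_mono hn hw
  have h2 : (-1:ℤ) ≤ hh n (-1) * ((n:ℤ) - 1) := le_hh_mul hn (-1)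
  have hN : (2:ℤ) ≤ (n:ℤ) - 1 := castN hn
  nlinarith [h2]

lemma hh_le_succ {n : ℕ} (hn : 3 ≤ n) (w : ℤ) : hh n w ≤ hh n (w - 1) + 1 := by
  have hN : ((n:ℤ) - 1) ≠ 0 := by
    linarith [castN hn]
  have hN' : (0:ℤ) < (n:ℤ) - 1 := by linarith [castN hn]
  rw [hh_eq hn, hh_eq hn]
  have h1 : (w - 1) ≤ (w - 2) + 1 * ((n:ℤ) - 1) := by linarith
  have h2 := Int.ediv_le_ediv hN' h1
  rw [Int.add_mul_ediv_right _ _ hN] at h2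
  have hw : w - 1 - 1 = w - 2 := by ring
  rw [hw]
  linarith


set_option maxHeartbeats 2000000

theorem stmt16 (n : ℕ) (hn : 3 ≤ n) (i j : ℤ) (hij : i < j)
    (Λ Θ : ℕ →₀ ℕ) (k u : ℕ) (hΛ : (Λ, k) ∈ Nset n i) (hΘ : (Θ, u) ∈ Nset n j)
    (huk : u < k) (hu : 1 ≤ Λ u) :
    (Λ + Θ - Finsupp.single u 1, k) ∈ Nset n (j - 1) := by
  simp only [Nset, Set.mem_setOf_eq] at hΛ hΘ ⊢
  obtain ⟨⟨hk1, hkn, hΛ0, hΛk⟩, s, hs1, hsi, hlevs⟩ := hΛ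
  obtain ⟨⟨hu1, hun, hΘ0, hΘu⟩, t, ht1, htj, hlevt⟩ := hΘ
  have hΓ0 : (Λ + Θ - Finsupp.single u 1 : ℕ →₀ ℕ) 0 = 0 := by
    simp [Finsupp.tsub_apply, hΛ0, hΘ0]
  have hΓk : ∀ m, k ≤ m → (Λ + Θ - Finsupp.single u 1 : ℕ →₀ ℕ) m = 0 := by
    intro m hm
    have h1 : Λ m = 0 := hΛk m hm
    have h2 : Θ m = 0 := hΘu m (by omega)
    simp [Finsupp.tsub_apply, h1, h2]
  have hbasis : IsBasisElt n (Λ + Θ - Finsupp.single u 1) k := ⟨hk1, hkn, hΓ0, hΓk⟩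
  have hle : Finsupp.single u 1 ≤ Λ + Θ := by
    rw [Finsupp.single_le_iff]
    simp only [Finsupp.add_apply]
    omega
  have hsum : (Λ + Θ - Finsupp.single u 1) + Finsupp.single u 1 = Λ + Θ :=
    tsub_add_cancel_of_le hle
  have hwt : wt (Λ + Θ - Finsupp.single u 1) + u = wt Λ + wt Θ := by
    have h := congrArg wt hsum
    rw [wt_add, wt_add, wt_single] at h
    omega
  have hdeg : deg (Λ + Θ - Finsupp.single u 1) + 1 = deg Λ + deg Θ := by
    have h := congrArg deg hsum
    rw [deg_add, deg_add, deg_single] at h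
    omega
  have hNN : (2:ℤ) ≤ (n:ℤ) - 1 := castN hn
  have hkZ : (k:ℤ) ≤ (n:ℤ) := by exact_mod_cast hkn
  have huZ : (1:ℤ) ≤ (u:ℤ) := by exact_mod_cast hu1
  have hukZ : (u:ℤ) + 1 ≤ (k:ℤ) := by exact_mod_cast huk
  have hwtZ : (wt (Λ + Θ - Finsupp.single u 1) : ℤ) + u = (wt Λ : ℤ) + (wt Θ : ℤ) := by
    exact_mod_cast hwt
  have hdegZ : (deg (Λ + Θ - Finsupp.single u 1) : ℤ) + 1 = (deg Λ : ℤ) + (deg Θ : ℤ) := by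
    exact_mod_cast hdeg
  have hWDΓ : WD n (Λ + Θ - Finsupp.single u 1) k = WD n Λ k + WD n Θ u - ((n:ℤ) - 1) := by
    simp only [WD]
    linarith
  have hdL1 : (1:ℤ) ≤ (deg Λ : ℤ) := by
    have := le_deg Λ u
    exact_mod_cast (by omega : 1 ≤ deg Λ)
  have hdT0 : (0:ℤ) ≤ (deg Θ : ℤ) := Int.natCast_nonneg _
  have hΛwd : (deg Λ : ℤ) ≤ (wt Λ : ℤ) := by exact_mod_cast deg_le_wt Λ hΛ0
  have hΘwd : (deg Θ : ℤ) ≤ (wt Θ : ℤ) := by exact_mod_cast deg_le_wt Θ hΘ0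
  have hA0 : 0 ≤ WD n Λ k := by simp only [WD]; linarith
  have hB1 : 1 ≤ WD n Θ u := by simp only [WD]; linarith
  have hΛwtle : (wt Λ : ℤ) ≤ ((k:ℤ) - 1) * (deg Λ : ℤ) := by
    have h := wt_le Λ k hk1 hΛk
    have h2 : (wt Λ : ℤ) ≤ ((k - 1 : ℕ) : ℤ) * (deg Λ : ℤ) := by exact_mod_cast h
    have h3 : ((k - 1 : ℕ) : ℤ) = (k:ℤ) - 1 := by omega
    rwa [h3] at h2
  have hΘwtle : (wt Θ : ℤ) ≤ ((u:ℤ) - 1) * (deg Θ : ℤ) := by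
    have h := wt_le Θ u hu1 hΘu
    have h2 : (wt Θ : ℤ) ≤ ((u - 1 : ℕ) : ℤ) * (deg Θ : ℤ) := by exact_mod_cast h
    have h3 : ((u - 1 : ℕ) : ℤ) = (u:ℤ) - 1 := by omega
    rwa [h3] at h2
  have hAle : WD n Λ k ≤ ((n:ℤ) - 2) * (deg Λ : ℤ) := by
    simp only [WD]
    have m1 : (0:ℤ) ≤ ((n:ℤ) - (k:ℤ)) * ((deg Λ : ℤ) - 1) :=
      mul_nonneg (by linarith) (by linarith)
    have m2 : ((n:ℤ) - 2) * (deg Λ : ℤ)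
        = ((k:ℤ) - 1) * (deg Λ : ℤ) - (deg Λ : ℤ)
          + ((n:ℤ) - (k:ℤ)) * ((deg Λ : ℤ) - 1) + ((n:ℤ) - (k:ℤ)) := by ring
    linarith [m1, m2, hΛwtle]
  have hBle : (deg Θ : ℤ) ≤ 1 → WD n Θ u ≤ (n:ℤ) - 1 := by
    intro h
    have h01 : (deg Θ : ℤ) = 0 ∨ (deg Θ : ℤ) = 1 := by omega
    simp only [WD]
    rcases h01 with h0 | h0
    · rw [h0] at hΘwtle ⊢
      rw [mul_zero] at hΘwtle
      linarith
    · rw [h0] at hΘwtle ⊢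
      rw [mul_one] at hΘwtle
      linarith
  -- h-function facts
  have hs0 : 0 ≤ hh n s := hh_nonneg hn hs1
  have ht0 : 0 ≤ hh n t := hh_nonneg hn ht1
  have hsN : s ≤ hh n s * ((n:ℤ) - 1) := le_hh_mul hn s
  have htN : t ≤ hh n t * ((n:ℤ) - 1) := le_hh_mul hn t
  simp only [lev] at hlevs hlevt
  -- goal helper
  have goalexp : ∀ w : ℤ,
      lev n w (Λ + Θ - Finsupp.single u 1) k
        = hh n w * WD n Λ k + hh n w * WD n Θ u - hh n w * ((n:ℤ) - 1)
          + ((deg Λ : ℤ) + (deg Θ : ℤ) - 1) - 1 := by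
    intro w
    simp only [lev, hWDΓ]
    rw [show (deg (Λ + Θ - Finsupp.single u 1) : ℤ)
        = (deg Λ : ℤ) + (deg Θ : ℤ) - 1 by linarith]
    ring
  by_cases hc : hh n s * WD n Θ u + (deg Θ : ℤ) ≤ hh n s * ((n:ℤ) - 1) + 1
  · -- Case I: witness s
    refine ⟨hbasis, s, hs1, by linarith, ?_⟩
    rw [goalexp]
    linarith
  · push_neg at hc
    have hdT2 : 2 ≤ (deg Θ : ℤ) := by
      by_contra h
      push_neg at h
      have hB := hBle (by linarith)
      have h2 : hh n s * WD n Θ u ≤ hh n s * ((n:ℤ) - 1) :=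
        mul_le_mul_of_nonneg_left hB hs0
      linarith
    have hBN2 : WD n Θ u ≤ (n:ℤ) - 2 := by
      by_contra h
      push_neg at h
      have h1 : 0 ≤ hh n t * (WD n Θ u - ((n:ℤ) - 1)) := mul_nonneg ht0 (by linarith)
      rw [mul_sub] at h1
      linarith
    have hTH : hh n s + 1 ≤ hh n t := by
      by_contra h
      push_neg at h
      have h2 : (hh n s - hh n t) * WD n Θ u ≤ (hh n s - hh n t) * ((n:ℤ) - 1) :=
        mul_le_mul_of_nonneg_left (by linarith) (by linarith)
      rw [sub_mul, sub_mul] at h2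
      linarith
    have htpos : 2 ≤ t := by
      have h3 : (1:ℤ) * 1 ≤ hh n t * WD n Θ u :=
        mul_le_mul (by linarith) (by linarith) (by norm_num) (by linarith)
      linarith
    have hA2 : WD n Λ k ≤ (n:ℤ) - 2 := by
      by_cases hdl : (deg Λ : ℤ) = 1
      · rw [hdl] at hAle; linarith
      · by_contra h
        push_neg at h
        have h4 : hh n s * ((n:ℤ) - 1) ≤ hh n s * WD n Λ k :=
          mul_le_mul_of_nonneg_left (by linarith) hs0
        have hdl2 : 2 ≤ (deg Λ : ℤ) := by omega
        linarith
    have hT'H : hh n s ≤ hh n (t - 1) := by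
      have := hh_le_succ hn t
      linarith
    by_cases hbT : hh n s + 1 ≤ hh n (t - 1)
    · -- Case II.b: witness t - 1
      refine ⟨hbasis, t - 1, by linarith, by linarith, ?_⟩
      rw [goalexp]
      have e1 : hh n (t - 1) * WD n Θ u ≤ hh n t * WD n Θ u :=
        mul_le_mul_of_nonneg_right (hh_mono hn (by linarith : t - 1 ≤ t)) (by linarith)
      have f2 : (deg Λ : ℤ) - 1 ≤ hh n s * ((n:ℤ) - 1) - hh n s * WD n Λ k := by
        linarith
      have f1 : (hh n s + 1) * (((n:ℤ) - 1) - WD n Λ k)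
          ≤ hh n (t - 1) * (((n:ℤ) - 1) - WD n Λ k) :=
        mul_le_mul_of_nonneg_right hbT (by linarith)
      have e2 : (deg Λ : ℤ) ≤ hh n (t - 1) * ((n:ℤ) - 1) - hh n (t - 1) * WD n Λ k := by
        have g1 : hh n (t - 1) * (((n:ℤ) - 1) - WD n Λ k)
            = hh n (t - 1) * ((n:ℤ) - 1) - hh n (t - 1) * WD n Λ k := by ring
        have g2 : (hh n s + 1) * (((n:ℤ) - 1) - WD n Λ k)
            = hh n s * ((n:ℤ) - 1) - hh n s * WD n Λ k + ((n:ℤ) - 1) - WD n Λ k := by ring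
        linarith [f1, f2, g1, g2, hA2]
      linarith
    · -- Case II.a: witness t - 1, with hh n (t-1) = hh n s
      push_neg at hbT
      have hT'eq : hh n (t - 1) = hh n s := le_antisymm (by linarith) hT'H
      have hTeq : hh n t = hh n s + 1 := by
        have h7 := hh_le_succ hn t
        have h8 : hh n (t - 1) ≤ hh n s := by linarith
        linarith
      have htlow : hh n s * ((n:ℤ) - 1) ≤ t - 1 := by
        have h5 := hh_mul_le hn t
        rw [hTeq] at h5
        have h6 : (hh n s + 1 - 1) * ((n:ℤ) - 1) = hh n s * ((n:ℤ) - 1) := by ring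
        linarith [h5, h6.symm.le.trans h5]
      refine ⟨hbasis, t - 1, by linarith, by linarith, ?_⟩
      rw [goalexp, hT'eq]
      have hexp : hh n t * WD n Θ u = hh n s * WD n Θ u + WD n Θ u := by
        rw [hTeq]; ring
      linarith
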